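/- Every zero-dimensional separable Rosenthal compact space K is homeomorphic to a compact subset of the function space SC_p(ω^ω), where ω^ω is the Baire space ℕ^ℕ of irrationals. -/

import Mathlib

open Set Filter Topology Cardinal

/-- A function is scatteredly continuous if every nonempty subset `A` of the domain
contains a point at which the restriction `f|A` is continuous. -/
def ScatCont {X Y : Type*} [TopologicalSpace X] [TopologicalSpace Y] (f : X → Y) : Prop :=
  ∀ A : Set X, A.Nonempty → ∃ a ∈ A, ContinuousWithinAt f A a

/-- A family of functions is scatteredly continuous if every nonempty subset `A` of the domain
contains a point at which all restrictions `f|A`, `f ∈ F`, are continuous. -/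
def ScatContFam {X Y : Type*} [TopologicalSpace X] [TopologicalSpace Y]
    (F : Set (X → Y)) : Prop :=
  ∀ A : Set X, A.Nonempty → ∃ a ∈ A, ∀ f ∈ F, ContinuousWithinAt f A a

/-- A function is weakly discontinuous if every subset `A` of the domain contains an
open (in `A`) dense (in `A`) subset `U` such that `f|U` is continuous. -/
def WeaklyDisc {X Y : Type*} [TopologicalSpace X] [TopologicalSpace Y] (f : X → Y) : Prop :=
  ∀ A : Set X, ∃ U : Set X, U ⊆ A ∧ (∃ V : Set X, IsOpen V ∧ U = V ∩ A) ∧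
    A ⊆ closure U ∧ ContinuousOn f U

/-- A family of functions is weakly discontinuous if every subset `A` of the domain contains an
open (in `A`) dense (in `A`) subset `U` such that every `f|U`, `f ∈ F`, is continuous. -/
def WeaklyDiscFam {X Y : Type*} [TopologicalSpace X] [TopologicalSpace Y]
    (F : Set (X → Y)) : Prop :=
  ∀ A : Set X, ∃ U : Set X, U ⊆ A ∧ (∃ V : Set X, IsOpen V ∧ U = V ∩ A) ∧
    A ⊆ closure U ∧ ∀ f ∈ F, ContinuousOn f U

/-- The decomposition number of a family `F` of functions: the smallest cardinality of a
cover `𝒞` of `X` such that every `f ∈ F` restricted to every `C ∈ 𝒞` is continuous. -/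
noncomputable def Dec {X Y : Type*} [TopologicalSpace X] [TopologicalSpace Y]
    (F : Set (X → Y)) : Cardinal :=
  sInf { c : Cardinal | ∃ 𝒞 : Set (Set X), c = #𝒞 ∧ ⋃₀ 𝒞 = Set.univ ∧
    ∀ C ∈ 𝒞, ∀ f ∈ F, ContinuousOn f C }

/-- The Lindelöf number: the smallest infinite cardinal `κ` such that every open cover
has a subcover of cardinality `≤ κ`. -/
noncomputable def lindelofNum (X : Type*) [TopologicalSpace X] : Cardinal :=
  sInf { κ : Cardinal | Cardinal.aleph0 ≤ κ ∧ ∀ 𝒰 : Set (Set X), (∀ U ∈ 𝒰, IsOpen U) →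
    ⋃₀ 𝒰 = Set.univ → ∃ 𝒱 ⊆ 𝒰, #𝒱 ≤ κ ∧ ⋃₀ 𝒱 = Set.univ }

/-- The hereditary Lindelöf number: the supremum of the Lindelöf numbers of all subspaces. -/
noncomputable def heredLindelofNum (X : Type*) [TopologicalSpace X] : Cardinal :=
  ⨆ Z : Set X, lindelofNum Z

/-- A network for a topological space: a family of (arbitrary) sets such that every open
neighbourhood of every point contains a member of the family containing that point. -/
def IsNetwork {X : Type*} [TopologicalSpace X] (N : Set (Set X)) : Prop :=
  ∀ (x : X) (U : Set X), IsOpen U → x ∈ U → ∃ n ∈ N, x ∈ n ∧ n ⊆ U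

/-- The network weight: the smallest infinite cardinality of a network. -/
noncomputable def netWt (X : Type*) [TopologicalSpace X] : Cardinal :=
  sInf { c : Cardinal | ∃ N : Set (Set X), IsNetwork N ∧ c = max #N Cardinal.aleph0 }

/-- The weight: the smallest infinite cardinality of a base of the topology. -/
noncomputable def wt (X : Type*) [TopologicalSpace X] : Cardinal :=
  sInf { c : Cardinal | ∃ B : Set (Set X), TopologicalSpace.IsTopologicalBasis B ∧
    c = max #B Cardinal.aleph0 }

/-- The density: the smallest cardinality of a dense subset. -/
noncomputable def dens (X : Type*) [TopologicalSpace X] : Cardinal :=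
  sInf { c : Cardinal | ∃ D : Set X, Dense D ∧ c = #D }

/-- The hereditary density: the supremum of densities of all subspaces. -/
noncomputable def heredDens (X : Type*) [TopologicalSpace X] : Cardinal :=
  ⨆ Z : Set X, dens Z

/-- The spread: the supremum of cardinalities of discrete subspaces. -/
noncomputable def spread (X : Type*) [TopologicalSpace X] : Cardinal :=
  sSup { c : Cardinal | ∃ D : Set X, DiscreteTopology D ∧ c = #D }

/-- A subset `C` of a topological vector space over `ℝ` is σ-convex if for every sequence
`(x n)` in `C` and every sequence `(t n)` of positive reals with `∑ n, t n = 1`, the series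
`∑ n, t n • x n` converges to a point of `C`. -/
def SigmaConvex {L : Type*} [AddCommGroup L] [Module ℝ L] [TopologicalSpace L]
    (C : Set L) : Prop :=
  ∀ (x : ℕ → L) (t : ℕ → ℝ), (∀ n, x n ∈ C) → (∀ n, 0 < t n) →
    Tendsto (fun N => ∑ n ∈ Finset.range N, t n) atTop (𝓝 1) →
    ∃ c ∈ C, Tendsto (fun N => ∑ n ∈ Finset.range N, t n • x n) atTop (𝓝 c)

/-- A topological space has countable tightness if every point in the closure of a set `A`
lies in the closure of a countable subset of `A`. -/
def CountablyTight (X : Type*) [TopologicalSpace X] : Prop :=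
  ∀ (A : Set X) (a : X), a ∈ closure A → ∃ B ⊆ A, B.Countable ∧ a ∈ closure B

/-- A real-valued function on a topological space is of the first Baire class if it is a
pointwise limit of a sequence of continuous functions. -/
def IsBaireOne {P : Type*} [TopologicalSpace P] (f : P → ℝ) : Prop :=
  ∃ g : ℕ → P → ℝ, (∀ n, Continuous (g n)) ∧ ∀ x, Tendsto (fun n => g n x) atTop (𝓝 (f x))



/-- A set is Fσ: countable union of closed sets. -/
def IsFsig {X : Type*} [TopologicalSpace X] (s : Set X) : Prop :=
  ∃ F : ℕ → Set X, (∀ n, IsClosed (F n)) ∧ s = ⋃ n, F n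

lemma IsClosed.isFsig {X : Type*} [TopologicalSpace X] {s : Set X} (h : IsClosed s) :
    IsFsig s := ⟨fun _ => s, fun _ => h, (iUnion_const s).symm⟩

lemma isFsig_empty {X : Type*} [TopologicalSpace X] : IsFsig (∅ : Set X) :=
  isClosed_empty.isFsig

lemma isFsig_univ {X : Type*} [TopologicalSpace X] : IsFsig (univ : Set X) :=
  isClosed_univ.isFsig

lemma IsFsig.iUnion {X : Type*} [TopologicalSpace X] {ι : Type*} [Countable ι]
    {s : ι → Set X} (h : ∀ i, IsFsig (s i)) : IsFsig (⋃ i, s i) := by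
  cases isEmpty_or_nonempty ι with
  | inl he => simp only [iUnion_of_empty]; exact isFsig_empty
  | inr hne =>
    choose F hFc hFe using h
    obtain ⟨e, he⟩ := exists_surjective_nat (ι × ℕ)
    refine ⟨fun n => F (e n).1 (e n).2, fun n => hFc _ _, ?_⟩
    ext x
    simp only [mem_iUnion]
    constructor
    · rintro ⟨i, hi⟩
      rw [hFe i] at hi
      obtain ⟨n, hn⟩ := mem_iUnion.1 hi
      obtain ⟨m, hm⟩ := he (i, n)
      exact ⟨m, by rw [hm]; exact hn⟩
    · rintro ⟨n, hn⟩
      exact ⟨(e n).1, by rw [hFe]; exact mem_iUnion.2 ⟨(e n).2, hn⟩⟩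

lemma IsFsig.inter {X : Type*} [TopologicalSpace X] {s t : Set X}
    (hs : IsFsig s) (ht : IsFsig t) : IsFsig (s ∩ t) := by
  obtain ⟨F, hFc, rfl⟩ := hs
  obtain ⟨G, hGc, rfl⟩ := ht
  obtain ⟨e, he⟩ := exists_surjective_nat (ℕ × ℕ)
  refine ⟨fun n => F (e n).1 ∩ G (e n).2, fun n => (hFc _).inter (hGc _), ?_⟩
  ext x
  simp only [mem_inter_iff, mem_iUnion]
  constructor
  · rintro ⟨⟨n, hn⟩, ⟨m, hm⟩⟩
    obtain ⟨p, hp⟩ := he (n, m)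
    exact ⟨p, by rw [hp]; exact ⟨hn, hm⟩⟩
  · rintro ⟨p, hp, hp'⟩
    exact ⟨⟨_, hp⟩, ⟨_, hp'⟩⟩

lemma IsFsig.preimage {X Y : Type*} [TopologicalSpace X] [TopologicalSpace Y]
    {s : Set Y} (hs : IsFsig s) {f : X → Y} (hf : Continuous f) : IsFsig (f ⁻¹' s) := by
  obtain ⟨F, hFc, rfl⟩ := hs
  exact ⟨fun n => f ⁻¹' F n, fun n => (hFc n).preimage hf, by rw [preimage_iUnion]⟩

lemma IsFsig.forall_lt {X : Type*} [TopologicalSpace X] {n : ℕ} {s : ℕ → Set X}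
    (h : ∀ j, j < n → IsFsig (s j)) : IsFsig {x | ∀ j < n, x ∈ s j} := by
  induction n with
  | zero => simpa using isFsig_univ
  | succ m ih =>
    have he : {x | ∀ j < m + 1, x ∈ s j} = {x | ∀ j < m, x ∈ s j} ∩ s m := by
      ext x
      simp only [mem_setOf_eq, mem_inter_iff]
      constructor
      · exact fun hx => ⟨fun j hj => hx j (hj.trans (Nat.lt_succ_self m)),
          hx m (Nat.lt_succ_self m)⟩
      · rintro ⟨h1, h2⟩ j hj
        rcases Nat.lt_succ_iff_lt_or_eq.1 hj with h' | rfl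
        · exact h1 j h'
        · exact h2
    rw [he]
    exact (ih (fun j hj => h j (hj.trans (Nat.lt_succ_self m)))).inter (h m (Nat.lt_succ_self m))

section BaireOne

variable {P : Type*} [TopologicalSpace P] {f : P → ℝ} {g : ℕ → P → ℝ}
  (hg : ∀ n, Continuous (g n)) (hlim : ∀ p, Tendsto (fun n => g n p) atTop (𝓝 (f p)))

include hg hlim

lemma isFsig_lt_fun (α : ℝ) : IsFsig {p | α < f p} := by
  have key : {p | α < f p} = ⋃ (qN : ℚ × ℕ),
      (if α < (qN.1 : ℝ) then {p | ∀ n, qN.2 ≤ n → (qN.1 : ℝ) ≤ g n p} else ∅) := by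
    ext p
    simp only [mem_setOf_eq, mem_iUnion]
    constructor
    · intro hp
      obtain ⟨q, hq1, hq2⟩ := exists_rat_btwn hp
      have hev : ∀ᶠ n in atTop, (q : ℝ) < g n p :=
        Filter.Tendsto.eventually_const_lt hq2 (hlim p)
      obtain ⟨N, hN⟩ := Filter.eventually_atTop.1 hev
      refine ⟨(q, N), ?_⟩
      rw [if_pos hq1]
      exact fun n hn => (hN n hn).le
    · rintro ⟨⟨q, N⟩, hp⟩
      by_cases hq : α < (q : ℝ)
      · rw [if_pos hq] at hp
        have : (q : ℝ) ≤ f p := by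
          refine ge_of_tendsto (hlim p) ?_
          exact Filter.eventually_atTop.2 ⟨N, fun n hn => hp n hn⟩
        exact lt_of_lt_of_le hq this
      · rw [if_neg hq] at hp
        exact absurd hp (notMem_empty p)
  rw [key]
  refine IsFsig.iUnion (fun qN => ?_)
  split_ifs with h
  · refine IsClosed.isFsig ?_
    have : {p | ∀ n, qN.2 ≤ n → (qN.1 : ℝ) ≤ g n p} =
        ⋂ (n : ℕ), ⋂ (_ : qN.2 ≤ n), {p | (qN.1 : ℝ) ≤ g n p} := by
      ext p; simp [mem_iInter]
    rw [this]
    exact isClosed_iInter fun n => isClosed_iInter fun _ => isClosed_le continuous_const (hg n)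
  · exact isFsig_empty

lemma isFsig_gt_fun (β : ℝ) : IsFsig {p | f p < β} := by
  have : {p | f p < β} = {p | -β < (-f) p} := by ext p; simp [neg_lt, mem_setOf_eq]
  rw [this]
  exact isFsig_lt_fun (f := -f) (g := fun n => -(g n)) (fun n => (hg n).neg)
    (fun p => ((hlim p).neg)) (-β)

lemma isFsig_preimage_Ioo (α β : ℝ) : IsFsig {p | f p ∈ Ioo α β} := by
  have : {p | f p ∈ Ioo α β} = {p | α < f p} ∩ {p | f p < β} := rfl
  rw [this]
  exact (isFsig_lt_fun hg hlim α).inter (isFsig_gt_fun hg hlim β)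

end BaireOne


lemma scatCont_indicator_of_isFsig {X : Type*} [TopologicalSpace X] [PolishSpace X]
    {A : Set X} (hA : IsFsig A) (hAc : IsFsig Aᶜ) :
    ScatCont (A.indicator (fun _ => (1 : ℝ))) := by
  letI := TopologicalSpace.upgradeIsCompletelyMetrizable X
  intro B hB
  by_cases hcase : ∃ b ∈ B, ∃ V : Set X, IsOpen V ∧ b ∈ V ∧ (V ∩ B ⊆ A ∨ V ∩ B ⊆ Aᶜ)
  · obtain ⟨b, hbB, V, hVo, hbV, hsub⟩ := hcase
    refine ⟨b, hbB, ?_⟩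
    have hVB : V ∩ B ∈ 𝓝[B] b :=
      inter_mem (mem_nhdsWithin_of_mem_nhds (hVo.mem_nhds hbV)) self_mem_nhdsWithin
    cases hsub with
    | inl h =>
      refine ContinuousWithinAt.congr_of_eventuallyEq
        (continuousWithinAt_const (b := (1 : ℝ))) ?_ ?_
      · filter_upwards [hVB] with x hx
        exact indicator_of_mem (h hx) _
      · exact indicator_of_mem (h ⟨hbV, hbB⟩) _
    | inr h =>
      refine ContinuousWithinAt.congr_of_eventuallyEq
        (continuousWithinAt_const (b := (0 : ℝ))) ?_ ?_
      · filter_upwards [hVB] with x hx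
        exact indicator_of_notMem (h hx) _
      · exact indicator_of_notMem (h ⟨hbV, hbB⟩) _
  · exfalso
    push_neg at hcase
    obtain ⟨F, hFc, hFe⟩ := hA
    obtain ⟨G, hGc, hGe⟩ := hAc
    have hTne : (closure B).Nonempty := hB.closure
    haveI : Nonempty ↥(closure B) := hTne.to_subtype
    haveI : CompleteSpace ↥(closure B) := isClosed_closure.completeSpace_coe
    set f : ℕ ⊕ ℕ → Set ↥(closure B) :=
      Sum.elim (fun n => Subtype.val ⁻¹' F n) (fun n => Subtype.val ⁻¹' G n) with hf
    have hfc : ∀ i, IsClosed (f i) := by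
      rintro (n | n)
      · exact (hFc n).preimage continuous_subtype_val
      · exact (hGc n).preimage continuous_subtype_val
    have hfu : ⋃ i, f i = Set.univ := by
      ext x
      simp only [mem_univ, iff_true, mem_iUnion]
      by_cases hx : (x : X) ∈ A
      · rw [hFe] at hx
        obtain ⟨n, hn⟩ := mem_iUnion.1 hx
        exact ⟨Sum.inl n, hn⟩
      · rw [← mem_compl_iff, hGe] at hx
        obtain ⟨n, hn⟩ := mem_iUnion.1 hx
        exact ⟨Sum.inr n, hn⟩
    obtain ⟨i, t, ht⟩ := nonempty_interior_of_iUnion_of_closed hfc hfu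
    have key : ∀ (S : Set X), (S ⊆ A ∨ S ⊆ Aᶜ) →
        t ∈ interior (Subtype.val ⁻¹' S : Set ↥(closure B)) → False := by
      intro S hS ht'
      obtain ⟨O, hOo, hOe⟩ := isOpen_induced_iff.1 (isOpen_interior
        (s := (Subtype.val ⁻¹' S : Set ↥(closure B))))
      have htO : (t : X) ∈ O := by
        rw [← hOe] at ht'
        exact ht'
      have hOB : (O ∩ B).Nonempty := by
        have := t.2
        rw [mem_closure_iff] at this
        exact this O hOo htO
      obtain ⟨b', hb'O, hb'B⟩ := hOB
      have hOBsub : O ∩ B ⊆ S := by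
        rintro x ⟨hxO, hxB⟩
        have hxT : x ∈ closure B := subset_closure hxB
        have : (⟨x, hxT⟩ : ↥(closure B)) ∈ Subtype.val ⁻¹' O := hxO
        rw [hOe] at this
        have h2 : (⟨x, hxT⟩ : ↥(closure B)) ∈ (Subtype.val ⁻¹' S : Set ↥(closure B)) :=
          interior_subset this
        exact h2
      have hcc := hcase b' hb'B O hOo hb'O
      cases hS with
      | inl h => exact hcc.1 (hOBsub.trans h)
      | inr h => exact hcc.2 (hOBsub.trans h)
    cases i with
    | inl n =>
      refine key (F n) (Or.inl ?_) ht
      rw [hFe]; exact subset_iUnion F n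
    | inr n =>
      refine key (G n) (Or.inr ?_) ht
      rw [hGe]; exact subset_iUnion G n


section Codes

/-- helper: finite intersections as bounded foralls are open -/
lemma isOpen_setOf_forall_lt {X : Type*} [TopologicalSpace X] {n : ℕ} {s : ℕ → Set X}
    (h : ∀ j, j < n → IsOpen (s j)) : IsOpen {x | ∀ j < n, x ∈ s j} := by
  induction n with
  | zero => simpa using isOpen_univ
  | succ m ih =>
    have he : {x | ∀ j < m + 1, x ∈ s j} = {x | ∀ j < m, x ∈ s j} ∩ s m := by
      ext x
      simp only [mem_setOf_eq, mem_inter_iff]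
      constructor
      · exact fun hx => ⟨fun j hj => hx j (hj.trans (Nat.lt_succ_self m)),
          hx m (Nat.lt_succ_self m)⟩
      · rintro ⟨h1, h2⟩ j hj
        rcases Nat.lt_succ_iff_lt_or_eq.1 hj with h' | rfl
        · exact h1 j h'
        · exact h2
    rw [he]
    exact (ih (fun j hj => h j (hj.trans (Nat.lt_succ_self m)))).inter (h m (Nat.lt_succ_self m))

noncomputable def qd : ℕ → ℚ := (exists_surjective_nat ℚ).choose

lemma qd_surjective : Function.Surjective qd := (exists_surjective_nat ℚ).choose_spec

noncomputable def qenc (q : ℚ) : ℕ := (qd_surjective q).choose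

@[simp] lemma qd_qenc (q : ℚ) : qd (qenc q) = q := (qd_surjective q).choose_spec

/-- Half-codes : number of boxes, box sizes, points, and rational (coded) bounds. -/
abbrev HC (P : Type) : Type := ℕ × (ℕ → ℕ) × (ℕ → ℕ → P) × (ℕ → ℕ → ℕ) × (ℕ → ℕ → ℕ)

abbrev HCr {P : Type} (c : HC P) : ℕ := c.1
abbrev HCs {P : Type} (c : HC P) : ℕ → ℕ := c.2.1
abbrev HCp {P : Type} (c : HC P) : ℕ → ℕ → P := c.2.2.1
abbrev HClo {P : Type} (c : HC P) : ℕ → ℕ → ℕ := c.2.2.2.1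
abbrev HChi {P : Type} (c : HC P) : ℕ → ℕ → ℕ := c.2.2.2.2

abbrev CC (P : Type) : Type := HC P × HC P

/-- The evaluation space. -/
abbrev YS : Type := Bool × ℕ × ℕ → ℝ

variable {K : Type*} [TopologicalSpace K] {P : Type} [TopologicalSpace P]

/-- membership of `k` in the open subset of `K` coded by the half-code `c`. -/
def memC (φ : K → P → ℝ) (k : K) (c : HC P) : Prop :=
  ∃ i < HCr c, ∀ j < HCs c i,
    (qd (HClo c i j) : ℝ) < φ k (HCp c i j) ∧ φ k (HCp c i j) < (qd (HChi c i j) : ℝ)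

/-- membership in the evaluation space version. -/
def memY (c : HC P) (t : Bool) (y : YS) : Prop :=
  ∃ i < HCr c, ∀ j < HCs c i,
    (qd (HClo c i j) : ℝ) < y (t, i, j) ∧ y (t, i, j) < (qd (HChi c i j) : ℝ)

def evx (φ : K → P → ℝ) (x : CC P) (k : K) : YS :=
  fun e => φ k (HCp (cond e.1 x.2 x.1) e.2.1 e.2.2)

lemma memY_evx_fst (φ : K → P → ℝ) (x : CC P) (k : K) :
    memY x.1 false (evx φ x k) ↔ memC φ k x.1 := Iff.rfl

lemma memY_evx_snd (φ : K → P → ℝ) (x : CC P) (k : K) :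
    memY x.2 true (evx φ x k) ↔ memC φ k x.2 := Iff.rfl

def Vmem (x : CC P) (y : YS) : Prop := memY x.1 false y ∨ memY x.2 true y

/-- open and closed box membership for box specs in the evaluation space -/
def obm (y : YS) (L : List ((Bool × ℕ × ℕ) × ℕ × ℕ)) : Prop :=
  ∀ e ∈ L, (qd e.2.1 : ℝ) < y e.1 ∧ y e.1 < (qd e.2.2 : ℝ)

def cbm (y : YS) (L : List ((Bool × ℕ × ℕ) × ℕ × ℕ)) : Prop :=
  ∀ e ∈ L, (qd e.2.1 : ℝ) ≤ y e.1 ∧ y e.1 ≤ (qd e.2.2 : ℝ)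

lemma obm_cbm {y : YS} {L : List ((Bool × ℕ × ℕ) × ℕ × ℕ)} (h : obm y L) : cbm y L :=
  fun e he => ⟨(h e he).1.le, (h e he).2.le⟩

/-- a certificate guaranteeing that the two half-codes cover `K`. -/
def CoverCert (φ : K → P → ℝ) (d : ℕ → K) (x : CC P) : Prop :=
  ∃ LL : List (List ((Bool × ℕ × ℕ) × ℕ × ℕ)),
    (∀ L ∈ LL, ∀ y : YS, cbm y L → Vmem x y) ∧
    ∀ m : ℕ, ∃ L ∈ LL, obm (evx φ x (d m)) L

def GoodSet (φ : K → P → ℝ) (d : ℕ → K) : Set (CC P) :=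
  {x | (∀ m, ¬(memC φ (d m) x.1 ∧ memC φ (d m) x.2)) ∧ CoverCert φ d x}

section TopLemmas

variable {φ : K → P → ℝ} (hφ : Continuous φ)

include hφ in
lemma isOpen_memC (c : HC P) : IsOpen {k | memC φ k c} := by
  have : {k | memC φ k c} = ⋃ (i : ℕ), ⋃ (_ : i < HCr c),
      {k | ∀ j < HCs c i, k ∈ {k' | (qd (HClo c i j) : ℝ) < φ k' (HCp c i j) ∧
        φ k' (HCp c i j) < (qd (HChi c i j) : ℝ)}} := by
    ext k
    simp only [mem_setOf_eq, mem_iUnion, memC, exists_prop]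
  rw [this]
  refine isOpen_iUnion fun i => isOpen_iUnion fun _ => isOpen_setOf_forall_lt fun j _ => ?_
  have hc : Continuous (fun k' => φ k' (HCp c i j)) := (continuous_apply _).comp hφ
  have : {k' | (qd (HClo c i j) : ℝ) < φ k' (HCp c i j) ∧
      φ k' (HCp c i j) < (qd (HChi c i j) : ℝ)} =
      (fun k' => φ k' (HCp c i j)) ⁻¹' (Ioo _ _) := rfl
  rw [this]
  exact (isOpen_Ioo).preimage hc

include hφ in
lemma continuous_evx (x : CC P) : Continuous (evx φ x) := by
  refine continuous_pi fun e => ?_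
  exact (continuous_apply _).comp hφ

end TopLemmas

lemma isOpen_memY (c : HC P) (t : Bool) : IsOpen {y : YS | memY c t y} := by
  have : {y : YS | memY c t y} = ⋃ (i : ℕ), ⋃ (_ : i < HCr c),
      {y : YS | ∀ j < HCs c i, y ∈ {y' : YS | (qd (HClo c i j) : ℝ) < y' (t, i, j) ∧
        y' (t, i, j) < (qd (HChi c i j) : ℝ)}} := by
    ext y
    simp only [mem_setOf_eq, mem_iUnion, memY, exists_prop]
  rw [this]
  refine isOpen_iUnion fun i => isOpen_iUnion fun _ => isOpen_setOf_forall_lt fun j _ => ?_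
  exact (isOpen_Ioo).preimage (continuous_apply _)

lemma isClosed_cbm (L : List ((Bool × ℕ × ℕ) × ℕ × ℕ)) : IsClosed {y : YS | cbm y L} := by
  have : {y : YS | cbm y L} = ⋂ (e : (Bool × ℕ × ℕ) × ℕ × ℕ), ⋂ (_ : e ∈ L),
      ({y : YS | (qd e.2.1 : ℝ) ≤ y e.1} ∩ {y : YS | y e.1 ≤ (qd e.2.2 : ℝ)}) := by
    ext y
    simp only [mem_setOf_eq, mem_iInter, mem_inter_iff, cbm]
  rw [this]
  exact isClosed_iInter fun e => isClosed_iInter fun _ =>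
    (isClosed_le continuous_const (continuous_apply _)).inter
      (isClosed_le (continuous_apply _) continuous_const)

lemma isOpen_obm (L : List ((Bool × ℕ × ℕ) × ℕ × ℕ)) : IsOpen {y : YS | obm y L} := by
  have : {y : YS | obm y L} = ⋂ e ∈ {e | e ∈ L},
      ((fun y : YS => y e.1) ⁻¹' (Ioo (qd e.2.1 : ℝ) (qd e.2.2 : ℝ))) := by
    ext y
    simp only [mem_setOf_eq, mem_iInter, mem_preimage, mem_Ioo, obm]
  rw [this]
  exact (List.finite_toSet L).isOpen_biInter fun e _ => (isOpen_Ioo).preimage (continuous_apply _)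

section CoverLemmas

variable {φ : K → P → ℝ} {d : ℕ → K}

/-- soundness: a cover certificate really does guarantee that the coded sets cover `K`. -/
lemma coverCert_sound (hφ : Continuous φ) (hd : DenseRange d) {x : CC P}
    (h : CoverCert φ d x) (k : K) : memC φ k x.1 ∨ memC φ k x.2 := by
  obtain ⟨LL, hα, hβ⟩ := h
  have hcont : Continuous (evx φ x) := continuous_evx hφ x
  set Sset : Set YS := ⋃ L ∈ LL, {y : YS | obm y L} with hSset
  set Cset : Set YS := ⋃ L ∈ LL, {y : YS | cbm y L} with hCset
  have hCclosed : IsClosed Cset :=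
    (List.finite_toSet LL).isClosed_biUnion fun L _ => isClosed_cbm L
  have hSC : Sset ⊆ Cset := by
    refine iUnion₂_mono fun L _ => ?_
    exact fun y hy => obm_cbm hy
  have hyk : evx φ x k ∈ closure Sset := by
    have h1 : k ∈ closure (range d) := by
      rw [hd.closure_range]; exact mem_univ k
    have h2 : evx φ x k ∈ (evx φ x) '' closure (range d) := mem_image_of_mem _ h1
    have h3 := image_closure_subset_closure_image (f := evx φ x) (s := range d) hcont h2
    refine closure_mono ?_ h3
    rintro y ⟨k', ⟨m, rfl⟩, rfl⟩
    obtain ⟨L, hL, hobm⟩ := hβ m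
    exact mem_biUnion hL hobm
  have hyC : evx φ x k ∈ Cset := by
    have : closure Sset ⊆ Cset := hCclosed.closure_subset_iff.2 hSC
    exact this hyk
  obtain ⟨L, hL, hcbm⟩ := mem_iUnion₂.1 hyC
  have := hα L hL (evx φ x k) hcbm
  cases this with
  | inl h => exact Or.inl ((memY_evx_fst φ x k).1 h)
  | inr h => exact Or.inr ((memY_evx_snd φ x k).1 h)

/-- completeness: if the coded sets cover the compact space `K`, a certificate exists. -/
lemma coverCert_of_cover [CompactSpace K] (hφ : Continuous φ) {x : CC P}
    (hcov : ∀ k, memC φ k x.1 ∨ memC φ k x.2) : CoverCert φ d x := by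
  classical
  have hcont : Continuous (evx φ x) := continuous_evx hφ x
  -- boxes around points of memY sets
  have box_of_memY : ∀ (c : HC P) (t : Bool) (y : YS), memY c t y →
      ∃ L : List ((Bool × ℕ × ℕ) × ℕ × ℕ), obm y L ∧ ∀ z : YS, cbm z L → memY c t z := by
    intro c t y hy
    obtain ⟨i, hi, hcond⟩ := hy
    have hch : ∀ j : ℕ, ∃ uv : ℚ × ℚ, j < HCs c i →
        ((qd (HClo c i j) : ℝ) < (uv.1 : ℝ) ∧ (uv.1 : ℝ) < y (t, i, j) ∧
         y (t, i, j) < (uv.2 : ℝ) ∧ (uv.2 : ℝ) < (qd (HChi c i j) : ℝ)) := by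
      intro j
      by_cases h : j < HCs c i
      · obtain ⟨h1, h2⟩ := hcond j h
        obtain ⟨u, hu1, hu2⟩ := exists_rat_btwn h1
        obtain ⟨v, hv1, hv2⟩ := exists_rat_btwn h2
        exact ⟨(u, v), fun _ => ⟨by exact_mod_cast hu1, hu2, hv1, by exact_mod_cast hv2⟩⟩
      · exact ⟨(0, 0), fun h' => absurd h' h⟩
    choose uv huv using hch
    refine ⟨(List.range (HCs c i)).map (fun j => ((t, i, j), qenc (uv j).1, qenc (uv j).2)),
      ?_, ?_⟩
    · intro e he
      obtain ⟨j, hj, rfl⟩ := List.mem_map.1 he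
      rw [List.mem_range] at hj
      obtain ⟨h1, h2, h3, h4⟩ := huv j hj
      simp only [qd_qenc]
      exact ⟨h2, h3⟩
    · intro z hz
      refine ⟨i, hi, fun j hj => ?_⟩
      have hmem : ((t, i, j), qenc (uv j).1, qenc (uv j).2) ∈
          (List.range (HCs c i)).map (fun j => ((t, i, j), qenc (uv j).1, qenc (uv j).2)) :=
        List.mem_map.2 ⟨j, List.mem_range.2 hj, rfl⟩
      have := hz _ hmem
      simp only [qd_qenc] at this
      obtain ⟨h1, h2, h3, h4⟩ := huv j hj
      exact ⟨lt_of_lt_of_le h1 this.1, lt_of_le_of_lt this.2 h4⟩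
  -- every point of the range is in a certified open box
  have cover : ∀ y ∈ range (evx φ x), ∃ L : List ((Bool × ℕ × ℕ) × ℕ × ℕ),
      obm y L ∧ ∀ z : YS, cbm z L → Vmem x z := by
    rintro y ⟨k, rfl⟩
    cases hcov k with
    | inl h =>
      obtain ⟨L, h1, h2⟩ := box_of_memY x.1 false (evx φ x k) ((memY_evx_fst φ x k).2 h)
      exact ⟨L, h1, fun z hz => Or.inl (h2 z hz)⟩
    | inr h =>
      obtain ⟨L, h1, h2⟩ := box_of_memY x.2 true (evx φ x k) ((memY_evx_snd φ x k).2 h)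
      exact ⟨L, h1, fun z hz => Or.inr (h2 z hz)⟩
  -- compactness
  set ι := {L : List ((Bool × ℕ × ℕ) × ℕ × ℕ) // ∀ z : YS, cbm z L → Vmem x z} with hι
  have hsub : range (evx φ x) ⊆ ⋃ L : ι, {y : YS | obm y L.1} := by
    intro y hy
    obtain ⟨L, h1, h2⟩ := cover y hy
    exact mem_iUnion.2 ⟨⟨L, h2⟩, h1⟩
  obtain ⟨tfin, htfin⟩ := (isCompact_range hcont).elim_finite_subcover
    (fun L : ι => {y : YS | obm y L.1}) (fun L => isOpen_obm L.1) hsub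
  refine ⟨tfin.toList.map Subtype.val, ?_, ?_⟩
  · intro L hL
    obtain ⟨L', hL', rfl⟩ := List.mem_map.1 hL
    exact L'.2
  · intro m
    have : evx φ x (d m) ∈ ⋃ L ∈ tfin, {y : YS | obm y L.1} := htfin (mem_range_self _)
    obtain ⟨L, hL, hobm⟩ := mem_iUnion₂.1 this
    exact ⟨L.1, List.mem_map.2 ⟨L, Finset.mem_toList.2 hL, rfl⟩, hobm⟩

/-- pointwise disjointness on good codes -/
lemma good_disj (hφ : Continuous φ) (hd : DenseRange d) {x : CC P} (hx : x ∈ GoodSet φ d)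
    (k : K) : ¬(memC φ k x.1 ∧ memC φ k x.2) := by
  intro hk
  have hopen : IsOpen ({k' | memC φ k' x.1} ∩ {k' | memC φ k' x.2}) :=
    (isOpen_memC hφ x.1).inter (isOpen_memC hφ x.2)
  obtain ⟨k', hk'W, hk'd⟩ := hd.inter_open_nonempty _ hopen ⟨k, hk⟩
  obtain ⟨m, rfl⟩ := hk'd
  exact hx.1 m hk'W

/-- on good codes, the first coded set is clopen with complement the second coded set -/
lemma good_clopen (hφ : Continuous φ) (hd : DenseRange d) {x : CC P} (hx : x ∈ GoodSet φ d) :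
    IsClopen {k | memC φ k x.1} ∧ {k | memC φ k x.1}ᶜ = {k | memC φ k x.2} := by
  have hcompl : {k | memC φ k x.1}ᶜ = {k | memC φ k x.2} := by
    ext k
    simp only [mem_compl_iff, mem_setOf_eq]
    constructor
    · intro h
      cases coverCert_sound hφ hd hx.2 k with
      | inl h' => exact absurd h' h
      | inr h' => exact h'
    · intro h h'
      exact good_disj hφ hd hx k ⟨h', h⟩
  refine ⟨⟨?_, isOpen_memC hφ x.1⟩, hcompl⟩
  rw [← isOpen_compl_iff, hcompl]
  exact isOpen_memC hφ x.2

end CoverLemmas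

end Codes


section Codes2

variable {K : Type*} [TopologicalSpace K] {P : Type} [TopologicalSpace P]

/-- build a half-code from a list of boxes, each box a list of (point, lo, hi). -/
noncomputable def codeOf [Nonempty P] (LL : List (List (P × ℚ × ℚ))) : HC P :=
  (LL.length, fun i => (LL.getD i []).length,
   fun i j => ((LL.getD i []).getD j (Classical.arbitrary P, 0, 0)).1,
   fun i j => qenc ((LL.getD i []).getD j (Classical.arbitrary P, 0, 0)).2.1,
   fun i j => qenc ((LL.getD i []).getD j (Classical.arbitrary P, 0, 0)).2.2)

lemma memC_codeOf_iff [Nonempty P] (φ : K → P → ℝ) (LL : List (List (P × ℚ × ℚ))) (k : K) :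
    memC φ k (codeOf LL) ↔ ∃ L ∈ LL, ∀ e ∈ L, (e.2.1 : ℝ) < φ k e.1 ∧ φ k e.1 < (e.2.2 : ℝ) := by
  constructor
  · rintro ⟨i, hi, hj⟩
    have hi' : i < LL.length := hi
    set L := LL.get ⟨i, hi'⟩ with hLdef
    have hgetD : LL.getD i [] = L := LL.getD_eq_get [] ⟨i, hi'⟩
    refine ⟨L, List.get_mem LL ⟨i, hi'⟩, ?_⟩
    intro e he
    obtain ⟨⟨j, hjl⟩, rfl⟩ := List.mem_iff_get.1 he
    have hjl' : j < HCs (codeOf LL) i := by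
      show j < (LL.getD i []).length
      rw [hgetD]; exact hjl
    have := hj j hjl'
    have hco : (LL.getD i []).getD j (Classical.arbitrary P, 0, 0) = L.get ⟨j, hjl⟩ := by
      rw [hgetD]; exact L.getD_eq_get _ ⟨j, hjl⟩
    simp only [memC, HCp, HClo, HChi, codeOf] at this
    rw [hco] at this
    simpa only [qd_qenc] using this
  · rintro ⟨L, hL, hbnd⟩
    obtain ⟨⟨i, hil⟩, hgeti⟩ := List.mem_iff_get.1 hL
    have hgetD : LL.getD i [] = L := by rw [LL.getD_eq_get [] ⟨i, hil⟩, hgeti]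
    refine ⟨i, hil, ?_⟩
    intro j hj
    have hj' : j < L.length := by
      have : j < (LL.getD i []).length := hj
      rwa [hgetD] at this
    have hco : (LL.getD i []).getD j (Classical.arbitrary P, 0, 0) = L.get ⟨j, hj'⟩ := by
      rw [hgetD]; exact L.getD_eq_get _ ⟨j, hj'⟩
    have := hbnd (L.get ⟨j, hj'⟩) (List.get_mem L ⟨j, hj'⟩)
    show (qd (qenc _) : ℝ) < φ k (((LL.getD i []).getD j _).1) ∧
      φ k (((LL.getD i []).getD j _).1) < (qd (qenc _) : ℝ)
    rw [hco]
    simpa only [qd_qenc] using this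

lemma memC_codeOf_univ [Nonempty P] (φ : K → P → ℝ) (k : K) :
    memC φ k (codeOf ([[]] : List (List (P × ℚ × ℚ)))) := by
  rw [memC_codeOf_iff]
  exact ⟨[], List.mem_singleton_self _, fun e he => absurd he List.not_mem_nil⟩

lemma not_memC_codeOf_empty [Nonempty P] (φ : K → P → ℝ) (k : K) :
    ¬ memC φ k (codeOf ([] : List (List (P × ℚ × ℚ)))) := by
  rw [memC_codeOf_iff]
  rintro ⟨L, hL, -⟩
  exact List.not_mem_nil hL

/-- every clopen subset of the compact space `K` is coded by some half-code. -/
lemma code_of_clopen [CompactSpace K] [Nonempty P] {φ : K → P → ℝ}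
    (hemb : Topology.IsEmbedding φ) {U : Set K} (hU : IsClopen U) :
    ∃ c : HC P, ∀ k, memC φ k c ↔ k ∈ U := by
  classical
  have hφ : Continuous φ := hemb.continuous
  obtain ⟨V, hVo, hVe⟩ := (hemb.isInducing.isOpen_iff).1 hU.2
  -- boxes around points of U
  have hbox : ∀ k : K, k ∈ U → ∃ L : List (P × ℚ × ℚ),
      (∀ e ∈ L, (e.2.1 : ℝ) < φ k e.1 ∧ φ k e.1 < (e.2.2 : ℝ)) ∧
      {k' | ∀ e ∈ L, (e.2.1 : ℝ) < φ k' e.1 ∧ φ k' e.1 < (e.2.2 : ℝ)} ⊆ U := by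
    intro k hk
    have hkV : φ k ∈ V := by rw [← hVe] at hk; exact hk
    obtain ⟨I, u, hIu, hpi⟩ := isOpen_pi_iff.1 hVo (φ k) hkV
    have hch : ∀ p : P, ∃ q : ℚ × ℚ, p ∈ I →
        ((q.1 : ℝ) < φ k p ∧ φ k p < (q.2 : ℝ) ∧ Ioo (q.1 : ℝ) (q.2 : ℝ) ⊆ u p) := by
      intro p
      by_cases hp : p ∈ I
      · obtain ⟨hop, hmem⟩ := hIu p hp
        obtain ⟨ε, hε, hball⟩ := Metric.isOpen_iff.1 hop _ hmem
        obtain ⟨q1, hq11, hq12⟩ := exists_rat_btwn (show φ k p - ε < φ k p by linarith)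
        obtain ⟨q2, hq21, hq22⟩ := exists_rat_btwn (show φ k p < φ k p + ε by linarith)
        refine ⟨(q1, q2), fun _ => ⟨hq12, hq21, ?_⟩⟩
        intro z hz
        refine hball ?_
        rw [Metric.mem_ball, Real.dist_eq, abs_lt]
        constructor <;> [linarith [hz.1]; linarith [hz.2]]
      · exact ⟨(0, 0), fun hp' => absurd hp' hp⟩
    choose q hq using hch
    refine ⟨I.toList.map (fun p => (p, (q p).1, (q p).2)), ?_, ?_⟩
    · intro e he
      obtain ⟨p, hp, rfl⟩ := List.mem_map.1 he
      rw [Finset.mem_toList] at hp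
      exact ⟨(hq p hp).1, (hq p hp).2.1⟩
    · intro k' hk'
      have hpi' : φ k' ∈ (↑I : Set P).pi u := by
        intro p hp
        have hmem : (p, (q p).1, (q p).2) ∈ I.toList.map (fun p => (p, (q p).1, (q p).2)) :=
          List.mem_map.2 ⟨p, Finset.mem_toList.2 hp, rfl⟩
        have hb := hk' _ hmem
        exact (hq p hp).2.2 ⟨hb.1, hb.2⟩
      have : φ k' ∈ V := hpi hpi'
      rw [← hVe]
      exact this
  -- compact subcover
  set ι := {L : List (P × ℚ × ℚ) //
    {k' | ∀ e ∈ L, (e.2.1 : ℝ) < φ k' e.1 ∧ φ k' e.1 < (e.2.2 : ℝ)} ⊆ U} with hι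
  have hopen : ∀ L : ι, IsOpen {k' | ∀ e ∈ L.1, (e.2.1 : ℝ) < φ k' e.1 ∧ φ k' e.1 < (e.2.2 : ℝ)} := by
    intro L
    have : {k' | ∀ e ∈ L.1, (e.2.1 : ℝ) < φ k' e.1 ∧ φ k' e.1 < (e.2.2 : ℝ)} =
        ⋂ e ∈ {e | e ∈ L.1}, ((fun k' => φ k' e.1) ⁻¹' (Ioo (e.2.1 : ℝ) (e.2.2 : ℝ))) := by
      ext k'
      simp only [mem_setOf_eq, mem_iInter, mem_preimage, mem_Ioo]
    rw [this]
    exact (List.finite_toSet L.1).isOpen_biInter fun e _ =>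
      (isOpen_Ioo).preimage ((continuous_apply _).comp hφ)
  have hcover : U ⊆ ⋃ L : ι, {k' | ∀ e ∈ L.1, (e.2.1 : ℝ) < φ k' e.1 ∧ φ k' e.1 < (e.2.2 : ℝ)} := by
    intro k hk
    obtain ⟨L, h1, h2⟩ := hbox k hk
    exact mem_iUnion.2 ⟨⟨L, h2⟩, h1⟩
  obtain ⟨tfin, htfin⟩ := (hU.1.isCompact).elim_finite_subcover _ hopen hcover
  refine ⟨codeOf (tfin.toList.map Subtype.val), fun k => ?_⟩
  rw [memC_codeOf_iff]
  constructor
  · rintro ⟨L, hL, hbnd⟩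
    obtain ⟨Lsub, hLsub, rfl⟩ := List.mem_map.1 hL
    exact Lsub.2 hbnd
  · intro hk
    have := htfin hk
    obtain ⟨Lsub, hLsub, hmem⟩ := mem_iUnion₂.1 this
    exact ⟨Lsub.1, List.mem_map.2 ⟨Lsub, Finset.mem_toList.2 hLsub, rfl⟩, hmem⟩

/-- Fσ-ness of the memC condition as a subset of the half-code space. -/
lemma isFsig_memC {φ : K → P → ℝ} (k : K) {g : ℕ → P → ℝ} (hgc : ∀ n, Continuous (g n))
    (hglim : ∀ p, Tendsto (fun n => g n p) atTop (𝓝 (φ k p))) :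
    IsFsig {c : HC P | memC φ k c} := by
  have hcond : ∀ i j : ℕ, IsFsig {c : HC P |
      (qd (HClo c i j) : ℝ) < φ k (HCp c i j) ∧ φ k (HCp c i j) < (qd (HChi c i j) : ℝ)} := by
    intro i j
    have : {c : HC P | (qd (HClo c i j) : ℝ) < φ k (HCp c i j) ∧
        φ k (HCp c i j) < (qd (HChi c i j) : ℝ)} =
        ⋃ (uv : ℕ × ℕ), ({c : HC P | HClo c i j = uv.1} ∩ {c : HC P | HChi c i j = uv.2} ∩
          ((fun c : HC P => HCp c i j) ⁻¹' {p | φ k p ∈ Ioo (qd uv.1 : ℝ) (qd uv.2 : ℝ)})) := by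
      ext c
      simp only [mem_setOf_eq, mem_iUnion, mem_inter_iff, mem_preimage, mem_Ioo]
      constructor
      · intro h
        exact ⟨(HClo c i j, HChi c i j), ⟨rfl, rfl⟩, h⟩
      · rintro ⟨⟨u, v⟩, ⟨h1, h2⟩, h3⟩
        rw [← h1, ← h2] at h3
        exact h3
    rw [this]
    refine IsFsig.iUnion fun uv => ?_
    refine IsFsig.inter (IsFsig.inter ?_ ?_) ?_
    · refine IsClosed.isFsig ?_
      have hcont : Continuous (fun c : HC P => HClo c i j) := by fun_prop
      exact (isClosed_discrete {uv.1}).preimage hcont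
    · refine IsClosed.isFsig ?_
      have hcont : Continuous (fun c : HC P => HChi c i j) := by fun_prop
      exact (isClosed_discrete {uv.2}).preimage hcont
    · refine IsFsig.preimage ?_ (by fun_prop)
      exact isFsig_preimage_Ioo hgc hglim _ _
  have key : {c : HC P | memC φ k c} = ⋃ (i : ℕ),
      (({c : HC P | i < HCr c}) ∩ ⋃ (n : ℕ), (({c : HC P | HCs c i = n}) ∩
        {c : HC P | ∀ j < n, c ∈ {c' : HC P | (qd (HClo c' i j) : ℝ) < φ k (HCp c' i j) ∧
          φ k (HCp c' i j) < (qd (HChi c' i j) : ℝ)}})) := by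
    ext c
    simp only [memC, mem_setOf_eq, mem_iUnion, mem_inter_iff]
    constructor
    · rintro ⟨i, hi, hj⟩
      exact ⟨i, hi, HCs c i, rfl, hj⟩
    · rintro ⟨i, hi, n, hn, hj⟩
      exact ⟨i, hi, fun j hjn => hj j (by omega)⟩
  rw [key]
  refine IsFsig.iUnion fun i => ?_
  refine IsFsig.inter ?_ (IsFsig.iUnion fun n => IsFsig.inter ?_ ?_)
  · refine IsClosed.isFsig ?_
    have hcont : Continuous (fun c : HC P => HCr c) := by fun_prop
    exact (isClosed_discrete {v | i < v}).preimage hcont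
  · refine IsClosed.isFsig ?_
    have hcont : Continuous (fun c : HC P => HCs c i) := by fun_prop
    exact (isClosed_discrete {n}).preimage hcont
  · exact IsFsig.forall_lt fun j _ => hcond i j

end Codes2


section Meas

lemma IsFsig.measurableSet {X : Type*} [TopologicalSpace X] [MeasurableSpace X]
    [OpensMeasurableSpace X] {s : Set X} (h : IsFsig s) : MeasurableSet s := by
  obtain ⟨F, hFc, rfl⟩ := h
  exact MeasurableSet.iUnion fun n => (hFc n).measurableSet

lemma meas_of_determined {X Γ : Type*} [MeasurableSpace X] [Countable Γ] (G : X → Γ)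
    (hG : ∀ γ : Γ, MeasurableSet (G ⁻¹' {γ})) {S : Set X}
    (hS : ∀ x y, G x = G y → x ∈ S → y ∈ S) : MeasurableSet S := by
  have key : S = ⋃ γ ∈ G '' S, G ⁻¹' {γ} := by
    ext x
    simp only [mem_iUnion, mem_preimage, mem_singleton_iff, mem_image]
    constructor
    · intro hx
      exact ⟨G x, ⟨x, hx, rfl⟩, rfl⟩
    · rintro ⟨γ, ⟨x', hx', rfl⟩, hGx⟩
      exact hS x' x hGx.symm hx'
  rw [key]
  exact MeasurableSet.biUnion (Set.to_countable _) fun γ _ => hG γ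

lemma map_range_eq_iff {α : Type*} (f : ℕ → α) (n : ℕ) (l : List α) :
    (List.range n).map f = l ↔ n = l.length ∧ ∀ i (h : i < l.length), f i = l.get ⟨i, h⟩ := by
  constructor
  · rintro rfl
    refine ⟨by simp, fun i h => ?_⟩
    have h' : i < n := by simpa using h
    simp [List.getElem_map, List.getElem_range, List.get_eq_getElem]
  · rintro ⟨rfl, hget⟩
    refine List.ext_get (by simp) fun i h1 h2 => ?_
    have h' : i < l.length := h2
    simp only [List.get_eq_getElem, List.getElem_map, List.getElem_range]
    have := hget i h'
    simpa [List.get_eq_getElem] using this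

variable {P : Type} [TopologicalSpace P]

/-- discrete truncation of a half-code -/
def trunc (c : HC P) : List (List (ℕ × ℕ)) :=
  (List.range (HCr c)).map (fun i => (List.range (HCs c i)).map (fun j => (HClo c i j, HChi c i j)))

lemma trunc_eq_spec {c c' : HC P} (h : trunc c = trunc c') :
    HCr c = HCr c' ∧ ∀ i < HCr c, HCs c i = HCs c' i ∧
      ∀ j < HCs c i, HClo c i j = HClo c' i j ∧ HChi c i j = HChi c' i j := by
  have hlen : HCr c = HCr c' := by
    have := congrArg List.length h
    simpa [trunc] using this
  refine ⟨hlen, fun i hi => ?_⟩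
  have hi' : i < HCr c' := hlen ▸ hi
  have hentry : (List.range (HCs c i)).map (fun j => (HClo c i j, HChi c i j)) =
      (List.range (HCs c' i)).map (fun j => (HClo c' i j, HChi c' i j)) := by
    have h1 : (trunc c)[i]'(by simpa [trunc] using hi) =
        (trunc c')[i]'(by simpa [trunc] using hi') := by
      congr 1
    simpa [trunc, List.getElem_map, List.getElem_range] using h1
  have hslen : HCs c i = HCs c' i := by
    have := congrArg List.length hentry
    simpa using this
  refine ⟨hslen, fun j hj => ?_⟩
  have hj' : j < HCs c' i := hslen ▸ hj
  have h2 : (HClo c i j, HChi c i j) = (HClo c' i j, HChi c' i j) := by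
    have hL : ((List.range (HCs c i)).map (fun j => (HClo c i j, HChi c i j))).getD j (0, 0) =
        (HClo c i j, HChi c i j) := by
      rw [List.getD_eq_getElem _ _ (by simpa using hj)]
      simp [List.getElem_map, List.getElem_range]
    have hR : ((List.range (HCs c' i)).map (fun j => (HClo c' i j, HChi c' i j))).getD j (0, 0) =
        (HClo c' i j, HChi c' i j) := by
      rw [List.getD_eq_getElem _ _ (by simpa using hj')]
      simp [List.getElem_map, List.getElem_range]
    have h1 : ((List.range (HCs c i)).map (fun j => (HClo c i j, HChi c i j))).getD j (0, 0) =
        ((List.range (HCs c' i)).map (fun j => (HClo c' i j, HChi c' i j))).getD j (0, 0) := by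
      rw [hentry]
    rw [hL, hR] at h1
    exact h1
  exact ⟨congrArg Prod.fst h2, congrArg Prod.snd h2⟩

lemma memY_congr_of_trunc {c c' : HC P} (h : trunc c = trunc c') (t : Bool) (y : YS) :
    memY c t y ↔ memY c' t y := by
  obtain ⟨hr, hspec⟩ := trunc_eq_spec h
  constructor
  · rintro ⟨i, hi, hj⟩
    obtain ⟨hs, hlohi⟩ := hspec i hi
    refine ⟨i, hr ▸ hi, fun j hjs => ?_⟩
    have hjs' : j < HCs c i := hs ▸ hjs
    obtain ⟨hlo, hhi⟩ := hlohi j hjs'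
    rw [← hlo, ← hhi]
    exact hj j hjs'
  · rintro ⟨i, hi, hj⟩
    have hi' : i < HCr c := hr ▸ hi
    obtain ⟨hs, hlohi⟩ := hspec i hi'
    refine ⟨i, hi', fun j hjs => ?_⟩
    obtain ⟨hlo, hhi⟩ := hlohi j hjs
    rw [hlo, hhi]
    exact hj j (hs ▸ hjs)

variable {K : Type*} [TopologicalSpace K]

lemma measurableSet_goodSet [MeasurableSpace (CC P)] [BorelSpace (CC P)]
    (φ : K → P → ℝ) (d : ℕ → K)
    (hb : ∀ k : K, ∃ g : ℕ → P → ℝ, (∀ n, Continuous (g n)) ∧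
      ∀ p, Tendsto (fun n => g n p) atTop (𝓝 (φ k p))) :
    MeasurableSet (GoodSet φ d) := by
  classical
  -- the memC sets are measurable
  have hmemC1 : ∀ k : K, MeasurableSet {x : CC P | memC φ k x.1} := by
    intro k
    obtain ⟨g, hgc, hglim⟩ := hb k
    have : {x : CC P | memC φ k x.1} = Prod.fst ⁻¹' {c : HC P | memC φ k c} := rfl
    rw [this]
    exact ((isFsig_memC k hgc hglim).preimage continuous_fst).measurableSet
  have hmemC2 : ∀ k : K, MeasurableSet {x : CC P | memC φ k x.2} := by
    intro k
    obtain ⟨g, hgc, hglim⟩ := hb k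
    have : {x : CC P | memC φ k x.2} = Prod.snd ⁻¹' {c : HC P | memC φ k c} := rfl
    rw [this]
    exact ((isFsig_memC k hgc hglim).preimage continuous_snd).measurableSet
  have hdisj : MeasurableSet {x : CC P | ∀ m, ¬(memC φ (d m) x.1 ∧ memC φ (d m) x.2)} := by
    have : {x : CC P | ∀ m, ¬(memC φ (d m) x.1 ∧ memC φ (d m) x.2)} =
        ⋂ (m : ℕ), ({x : CC P | memC φ (d m) x.1} ∩ {x : CC P | memC φ (d m) x.2})ᶜ := by
      ext x
      simp only [mem_setOf_eq, mem_iInter, mem_compl_iff, mem_inter_iff]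
    rw [this]
    exact MeasurableSet.iInter fun m => ((hmemC1 (d m)).inter (hmemC2 (d m))).compl
  -- fibers of the truncation are measurable
  have htruncfiber : ∀ (pr : HC P × HC P → HC P), Continuous pr →
      ∀ l : List (List (ℕ × ℕ)), MeasurableSet {x : CC P | trunc (pr x) = l} := by
    intro pr hpr l
    have key : {x : CC P | trunc (pr x) = l} = {x | HCr (pr x) = l.length} ∩
        ⋂ (i : ℕ), ⋂ (_ : i < l.length),
          ({x | HCs (pr x) i = (l.getD i []).length} ∩
            ⋂ (j : ℕ), ⋂ (_ : j < (l.getD i []).length),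
              ({x | HClo (pr x) i j = ((l.getD i []).getD j (0, 0)).1} ∩
               {x | HChi (pr x) i j = ((l.getD i []).getD j (0, 0)).2})) := by
      ext x
      simp only [mem_setOf_eq, mem_inter_iff, mem_iInter, trunc]
      rw [map_range_eq_iff]
      constructor
      · rintro ⟨hlen, hget⟩
        refine ⟨hlen, fun i hi => ?_⟩
        have hgd : l.getD i [] = l.get ⟨i, hi⟩ := l.getD_eq_get _ ⟨i, hi⟩
        have := hget i hi
        rw [map_range_eq_iff] at this
        obtain ⟨h1, h2⟩ := this
        rw [hgd]
        refine ⟨h1, fun j hj => ?_⟩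
        have hgd2 : (l.get ⟨i, hi⟩).getD j (0, 0) = (l.get ⟨i, hi⟩).get ⟨j, hj⟩ :=
          (l.get ⟨i, hi⟩).getD_eq_get _ ⟨j, hj⟩
        rw [hgd2]
        have := h2 j hj
        exact ⟨congrArg Prod.fst this, congrArg Prod.snd this⟩
      · rintro ⟨hlen, hrest⟩
        refine ⟨hlen, fun i hi => ?_⟩
        obtain ⟨h1, h2⟩ := hrest i hi
        have hgd : l.getD i [] = l.get ⟨i, hi⟩ := l.getD_eq_get _ ⟨i, hi⟩
        rw [hgd] at h1 h2
        rw [map_range_eq_iff]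
        refine ⟨h1, fun j hj => ?_⟩
        have := h2 j hj
        have hgd2 : (l.get ⟨i, hi⟩).getD j (0, 0) = (l.get ⟨i, hi⟩).get ⟨j, hj⟩ :=
          (l.get ⟨i, hi⟩).getD_eq_get _ ⟨j, hj⟩
        rw [hgd2] at this
        exact Prod.ext this.1 this.2
    rw [key]
    have hcoord : ∀ (f : CC P → ℕ) (v : ℕ), Continuous f → MeasurableSet {x : CC P | f x = v} := by
      intro f v hf
      have : {x : CC P | f x = v} = f ⁻¹' {v} := rfl
      rw [this]
      exact ((isClosed_discrete ({v} : Set ℕ)).preimage hf).measurableSet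
    refine MeasurableSet.inter (hcoord _ _ (by fun_prop)) ?_
    refine MeasurableSet.iInter fun i => MeasurableSet.iInter fun _ => ?_
    refine MeasurableSet.inter (hcoord _ _ (by fun_prop)) ?_
    refine MeasurableSet.iInter fun j => MeasurableSet.iInter fun _ => ?_
    exact MeasurableSet.inter (hcoord _ _ (by fun_prop)) (hcoord _ _ (by fun_prop))
  -- the cover-certificate set is measurable
  have hB : ∀ (LL : List (List ((Bool × ℕ × ℕ) × ℕ × ℕ))) (m : ℕ),
      MeasurableSet {x : CC P | ∃ L ∈ LL, obm (evx φ x (d m)) L} := by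
    intro LL m
    have : {x : CC P | ∃ L ∈ LL, obm (evx φ x (d m)) L} =
        ⋃ (L : List ((Bool × ℕ × ℕ) × ℕ × ℕ)), ⋃ (_ : L ∈ LL),
          ⋂ (e : (Bool × ℕ × ℕ) × ℕ × ℕ), ⋂ (_ : e ∈ L),
            {x : CC P | (qd e.2.1 : ℝ) < evx φ x (d m) e.1 ∧ evx φ x (d m) e.1 < (qd e.2.2 : ℝ)} := by
      ext x
      simp only [mem_setOf_eq, mem_iUnion, mem_iInter, obm]
      tauto
    rw [this]
    refine MeasurableSet.iUnion fun L => MeasurableSet.iUnion fun _ => ?_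
    refine MeasurableSet.iInter fun e => MeasurableSet.iInter fun he => ?_
    obtain ⟨g, hgc, hglim⟩ := hb (d m)
    obtain ⟨⟨t, i, j⟩, u, v⟩ := e
    have heq : {x : CC P | (qd u : ℝ) < evx φ x (d m) (t, i, j) ∧
        evx φ x (d m) (t, i, j) < (qd v : ℝ)} =
        (fun x : CC P => HCp (cond t x.2 x.1) i j) ⁻¹'
          {p : P | φ (d m) p ∈ Ioo (qd u : ℝ) (qd v : ℝ)} := rfl
    rw [heq]
    refine ((isFsig_preimage_Ioo hgc hglim _ _).preimage ?_).measurableSet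
    cases t <;> simp only [cond] <;> fun_prop
  -- the box-certificate set is measurable via determinacy
  have hA : ∀ (LL : List (List ((Bool × ℕ × ℕ) × ℕ × ℕ))),
      MeasurableSet {x : CC P | ∀ L ∈ LL, ∀ y : YS, cbm y L → Vmem x y} := by
    intro LL
    refine meas_of_determined (fun x : CC P => (trunc x.1, trunc x.2)) ?_ ?_
    · intro γ
      have : (fun x : CC P => (trunc x.1, trunc x.2)) ⁻¹' {γ} =
          {x : CC P | trunc x.1 = γ.1} ∩ {x : CC P | trunc x.2 = γ.2} := by
        ext x
        simp only [mem_preimage, mem_singleton_iff, Prod.ext_iff, mem_inter_iff, mem_setOf_eq]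
      rw [this]
      exact (htruncfiber Prod.fst continuous_fst γ.1).inter
        (htruncfiber Prod.snd continuous_snd γ.2)
    · intro x x' hxx' hx L hL y hy
      have h1 : trunc x.1 = trunc x'.1 := congrArg Prod.fst hxx'
      have h2 : trunc x.2 = trunc x'.2 := congrArg Prod.snd hxx'
      have := hx L hL y hy
      cases this with
      | inl h => exact Or.inl ((memY_congr_of_trunc h1 false y).1 h)
      | inr h => exact Or.inr ((memY_congr_of_trunc h2 true y).1 h)
  have hcert : MeasurableSet {x : CC P | CoverCert φ d x} := by
    have : {x : CC P | CoverCert φ d x} =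
        ⋃ (LL : List (List ((Bool × ℕ × ℕ) × ℕ × ℕ))),
          ({x : CC P | ∀ L ∈ LL, ∀ y : YS, cbm y L → Vmem x y} ∩
            ⋂ (m : ℕ), {x : CC P | ∃ L ∈ LL, obm (evx φ x (d m)) L}) := by
      ext x
      simp only [mem_setOf_eq, mem_iUnion, mem_inter_iff, mem_iInter, CoverCert]
    rw [this]
    exact MeasurableSet.iUnion fun LL =>
      (hA LL).inter (MeasurableSet.iInter fun m => hB LL m)
  have : GoodSet φ d = {x : CC P | ∀ m, ¬(memC φ (d m) x.1 ∧ memC φ (d m) x.2)} ∩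
      {x : CC P | CoverCert φ d x} := rfl
  rw [this]
  exact hdisj.inter hcert

lemma analyticSet_goodSet [PolishSpace P] (φ : K → P → ℝ) (d : ℕ → K)
    (hb : ∀ k : K, ∃ g : ℕ → P → ℝ, (∀ n, Continuous (g n)) ∧
      ∀ p, Tendsto (fun n => g n p) atTop (𝓝 (φ k p))) :
    MeasureTheory.AnalyticSet (GoodSet φ d) := by
  haveI i1 : PolishSpace ((ℕ → ℕ → ℕ) × (ℕ → ℕ → ℕ)) := inferInstance
  haveI i2 : PolishSpace ((ℕ → ℕ → P) × (ℕ → ℕ → ℕ) × (ℕ → ℕ → ℕ)) := inferInstance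
  haveI i3 : PolishSpace ((ℕ → ℕ) × (ℕ → ℕ → P) × (ℕ → ℕ → ℕ) × (ℕ → ℕ → ℕ)) := { toSecondCountableTopology := inferInstance, toIsCompletelyMetrizableSpace := inferInstance }
  haveI i4 : PolishSpace (HC P) := { toSecondCountableTopology := inferInstance, toIsCompletelyMetrizableSpace := inferInstance }
  haveI i5 : PolishSpace (CC P) := inferInstance
  borelize (CC P)
  exact (measurableSet_goodSet φ d hb).analyticSet

end Meas


lemma continuous_indicator_clopen {X : Type*} [TopologicalSpace X] {W : Set X}
    (hW : IsClopen W) : Continuous (W.indicator (fun _ => (1 : ℝ))) := by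
  classical
  refine IsLocallyConstant.continuous (fun s => ?_)
  have hpre : W.indicator (fun _ => (1 : ℝ)) ⁻¹' s =
      ((if (1 : ℝ) ∈ s then W else ∅) ∪ (if (0 : ℝ) ∈ s then Wᶜ else ∅)) := by
    ext k
    by_cases hk : k ∈ W <;> by_cases h1 : (1 : ℝ) ∈ s <;> by_cases h0 : (0 : ℝ) ∈ s <;>
      simp [Set.indicator_apply, hk, h1, h0]
  rw [hpre]
  refine IsOpen.union ?_ ?_ <;> split_ifs
  · exact hW.2
  · exact isOpen_empty
  · exact hW.compl.2
  · exact isOpen_empty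


/-- Each zero-dimensional separable Rosenthal compact space `K` (a compact Hausdorff space
with a base of clopen sets, having a countable dense subset, which embeds into the space
`B₁(P)` of Baire class one functions on some Polish space `P` with the pointwise topology)
is homeomorphic to a compact subset of the function space `SC_p(ω^ω)` over the Baire space
`ω^ω = ℕ → ℕ`. -/
theorem stmt15 {K : Type*} [TopologicalSpace K] [CompactSpace K] [T2Space K]
    [TopologicalSpace.SeparableSpace K]
    (hzd : TopologicalSpace.IsTopologicalBasis {s : Set K | IsClopen s})
    (hRos : ∃ (P : Type) (_ : TopologicalSpace P), PolishSpace P ∧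
      ∃ φ : K → P → ℝ, Topology.IsEmbedding φ ∧ ∀ k, IsBaireOne (φ k)) :
    ∃ ψ : K → (ℕ → ℕ) → ℝ, Topology.IsEmbedding ψ ∧ (∀ k, ScatCont (ψ k)) ∧
      IsCompact (Set.range ψ) := by
  classical
  by_cases hK : Subsingleton K
  · refine ⟨fun _ _ => 0, Topology.IsEmbedding.of_subsingleton _, ?_, ?_⟩
    · intro k A hA
      obtain ⟨a, ha⟩ := hA
      exact ⟨a, ha, continuousWithinAt_const⟩
    · refine Set.Subsingleton.isCompact ?_
      rintro _ ⟨k, rfl⟩ _ ⟨k', rfl⟩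
      rfl
  · rw [not_subsingleton_iff_nontrivial] at hK
    haveI : Nonempty K := ⟨hK.exists_pair_ne.choose⟩
    obtain ⟨P, tP, hPol, φ, hemb, hb1⟩ := hRos
    letI : TopologicalSpace P := tP
    haveI : PolishSpace P := hPol
    by_cases hP : Nonempty P
    swap
    · exfalso
      haveI : IsEmpty P := not_nonempty_iff.1 hP
      obtain ⟨k, k', hne⟩ := hK.exists_pair_ne
      exact hne (hemb.injective (funext fun p => isEmptyElim p))
    haveI := hP
    set d := TopologicalSpace.denseSeq K with hddef
    have hd : DenseRange d := TopologicalSpace.denseRange_denseSeq K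
    have hφc : Continuous φ := hemb.continuous
    have hb : ∀ k : K, ∃ g : ℕ → P → ℝ, (∀ n, Continuous (g n)) ∧
        ∀ p, Tendsto (fun n => g n p) atTop (𝓝 (φ k p)) := hb1
    -- the good code set is nonempty and analytic
    have hGne : ((codeOf ([[]] : List (List (P × ℚ × ℚ))), codeOf []) : CC P) ∈ GoodSet φ d := by
      constructor
      · intro m hm
        exact not_memC_codeOf_empty φ (d m) hm.2
      · exact coverCert_of_cover hφc (fun k => Or.inl (memC_codeOf_univ φ k))
    have hGanalytic : GoodSet φ d = ∅ ∨ ∃ f : (ℕ → ℕ) → CC P, Continuous f ∧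
        range f = GoodSet φ d := by
      have h := analyticSet_goodSet φ d hb
      rwa [MeasureTheory.AnalyticSet] at h
    have hGor : ∃ f : (ℕ → ℕ) → CC P, Continuous f ∧ range f = GoodSet φ d := by
      cases hGanalytic with
      | inl h => rw [h] at hGne; exact absurd hGne (notMem_empty _)
      | inr h => exact h
    obtain ⟨σ, hσc, hσr⟩ := hGor
    have hσG : ∀ z, σ z ∈ GoodSet φ d := by
      intro z
      rw [← hσr]
      exact mem_range_self z
    -- the embedding
    set ψ : K → (ℕ → ℕ) → ℝ :=
      fun k => Set.indicator {z : ℕ → ℕ | memC φ k (σ z).1} (fun _ => (1 : ℝ)) with hψdef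
    have hψc : Continuous ψ := by
      refine continuous_pi fun z => ?_
      have hrw : (fun k => ψ k z) =
          Set.indicator {k' | memC φ k' (σ z).1} (fun _ => (1 : ℝ)) := by
        funext k
        simp only [hψdef, Set.indicator_apply, mem_setOf_eq]
      rw [hrw]
      exact continuous_indicator_clopen (good_clopen hφc hd (hσG z)).1
    have hψi : Function.Injective ψ := by
      intro k k' hkk'
      by_contra hne
      obtain ⟨W, hWb, hkW, hWsub⟩ := hzd.exists_subset_of_mem_open
        (show k ∈ ({k'}ᶜ : Set K) from hne) isOpen_compl_singleton
      have hW : IsClopen W := hWb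
      obtain ⟨c, hc⟩ := code_of_clopen hemb hW
      obtain ⟨c', hc'⟩ := code_of_clopen hemb hW.compl
      have hxGood : ((c, c') : CC P) ∈ GoodSet φ d := by
        constructor
        · rintro m ⟨hm1, hm2⟩
          exact ((hc' (d m)).1 hm2) ((hc (d m)).1 hm1)
        · refine coverCert_of_cover hφc fun k'' => ?_
          by_cases h : k'' ∈ W
          · exact Or.inl ((hc k'').2 h)
          · exact Or.inr ((hc' k'').2 h)
      have : ((c, c') : CC P) ∈ range σ := by rw [hσr]; exact hxGood
      obtain ⟨z, hz⟩ := this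
      have h1 : ψ k z = 1 := by
        refine indicator_of_mem ?_ _
        show memC φ k (σ z).1
        rw [hz]
        exact (hc k).2 hkW
      have h2 : ψ k' z = 0 := by
        refine indicator_of_notMem ?_ _
        show ¬ memC φ k' (σ z).1
        rw [hz]
        intro hmem
        exact hWsub ((hc k').1 hmem) rfl
      rw [hkk'] at h1
      rw [h1] at h2
      exact one_ne_zero h2
    refine ⟨ψ, (hψc.isClosedEmbedding hψi).isEmbedding, ?_, isCompact_range hψc⟩
    intro k
    obtain ⟨g, hgc, hglim⟩ := hb k
    have hA : IsFsig {z : ℕ → ℕ | memC φ k (σ z).1} := by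
      have : {z : ℕ → ℕ | memC φ k (σ z).1} =
          σ ⁻¹' (Prod.fst ⁻¹' {c : HC P | memC φ k c}) := rfl
      rw [this]
      exact (((isFsig_memC k hgc hglim).preimage continuous_fst).preimage hσc)
    have hAc : IsFsig ({z : ℕ → ℕ | memC φ k (σ z).1})ᶜ := by
      have hcompl : ({z : ℕ → ℕ | memC φ k (σ z).1})ᶜ = {z : ℕ → ℕ | memC φ k (σ z).2} := by
        ext z
        simp only [mem_compl_iff, mem_setOf_eq]
        constructor
        · intro h
          cases coverCert_sound hφc hd (hσG z).2 k with
          | inl h' => exact absurd h' h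
          | inr h' => exact h'
        · intro h h'
          exact good_disj hφc hd (hσG z) k ⟨h', h⟩
      rw [hcompl]
      have : {z : ℕ → ℕ | memC φ k (σ z).2} =
          σ ⁻¹' (Prod.snd ⁻¹' {c : HC P | memC φ k c}) := rfl
      rw [this]
      exact (((isFsig_memC k hgc hglim).preimage continuous_snd).preimage hσc)
    exact scatCont_indicator_of_isFsig hA hAc
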